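/- arXiv:2503.17929 — 2 statements merged into one kernel-verified Lean document; each statement's English description precedes it below -/
import Mathlib

section
/- Let V be a real normed space, B : V × V → ℝ a continuous symmetric bilinear map, and h : [a,b] → V a continuous function. Then 2·∫_a^b (∫_s^b B(h(s), h(u)) du) ds = B(∫_a^b h(s) ds, ∫_a^b h(s) ds). -/
open intervalIntegral

private lemma bsi_cont {V : Type*} [NormedAddCommGroup V]
    [NormedSpace ℝ V] [CompleteSpace V] (B : V →L[ℝ] V →L[ℝ] ℝ)
    (hB : ∀ x y : V, B x y = B y x) {a b : ℝ} (hab : a ≤ b)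
    (h : ℝ → V) (hcont : Continuous h) :
    2 * ∫ s in a..b, (∫ u in s..b, B (h s) (h u)) =
      B (∫ s in a..b, h s) (∫ s in a..b, h s) := by
  set F : ℝ → V := fun s => ∫ u in s..b, h u with hF
  have hint : ∀ x y : ℝ, IntervalIntegrable h MeasureTheory.volume x y :=
    fun x y => hcont.intervalIntegrable x y
  have hFderiv : ∀ s : ℝ, HasDerivAt F (-(h s)) s := by
    intro s
    have : HasDerivAt (fun t => ∫ u in b..t, h u) (h s) s :=
      intervalIntegral.integral_hasDerivAt_right (hint b s)
        hcont.stronglyMeasurable.stronglyMeasurableAtFilter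
        hcont.continuousAt
    have := this.neg
    simpa [F, intervalIntegral.integral_symm b, Pi.neg_def] using this
  have hFcont : Continuous F :=
    continuous_iff_continuousAt.2 fun s => (hFderiv s).continuousAt
  have hGderiv : ∀ s : ℝ,
      HasDerivAt (fun s => B (F s) (F s)) (-(2 * B (h s) (F s))) s := by
    intro s
    have hc : HasDerivAt (fun s => B (F s)) (B (-(h s))) s :=
      B.hasFDerivAt.comp_hasDerivAt s (hFderiv s)
    have := hc.clm_apply (hFderiv s)
    convert this using 1
    · rfl
    · rfl
    simp [hB (F s) (h s)]
    ring
  have hg'int : IntervalIntegrable (fun s => -(2 * B (h s) (F s)))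
      MeasureTheory.volume a b := by
    apply Continuous.intervalIntegrable
    continuity
  have key := intervalIntegral.integral_eq_sub_of_hasDerivAt
    (f := fun s => B (F s) (F s)) (fun x _ => hGderiv x) hg'int
  have hFb : F b = 0 := by simp [F]
  have hswap : ∀ s : ℝ, (∫ u in s..b, B (h s) (h u)) = B (h s) (F s) := by
    intro s
    exact (B (h s)).intervalIntegral_comp_comm (hint s b)
  have : (∫ s in a..b, -(2 * B (h s) (F s))) =
      -(2 * ∫ s in a..b, B (h s) (F s)) := by
    rw [intervalIntegral.integral_neg, intervalIntegral.integral_const_mul]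
  rw [this] at key
  simp only [hFb, map_zero, ContinuousLinearMap.zero_apply, zero_sub, neg_inj] at key
  calc 2 * ∫ s in a..b, (∫ u in s..b, B (h s) (h u))
      = 2 * ∫ s in a..b, B (h s) (F s) := by simp_rw [hswap]
    _ = B (F a) (F a) := key
    _ = B (∫ s in a..b, h s) (∫ s in a..b, h s) := rfl

/-- Symmetrization identity: for a continuous symmetric bilinear map `B` and a continuous
`h : [a,b] → V`, `2 ∫_a^b ∫_s^b B(h s, h u) du ds = B(∫_a^b h, ∫_a^b h)`. -/
theorem bilinear_symmetrization_identity {V : Type*} [NormedAddCommGroup V]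
    [NormedSpace ℝ V] [CompleteSpace V] (B : V →L[ℝ] V →L[ℝ] ℝ)
    (hB : ∀ x y : V, B x y = B y x) {a b : ℝ} (hab : a ≤ b)
    (h : ℝ → V) (hcont : ContinuousOn h (Set.Icc a b)) :
    2 * ∫ s in a..b, (∫ u in s..b, B (h s) (h u)) =
      B (∫ s in a..b, h s) (∫ s in a..b, h s) := by
  set g : ℝ → V := fun x => h (Set.projIcc a b hab x) with hg
  have hgcont : Continuous g :=
    (hcont.comp_continuous (continuous_subtype_val.comp continuous_projIcc) (fun x => (Set.projIcc a b hab x).2))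
  have hgeq : ∀ x ∈ Set.Icc a b, g x = h x := by
    intro x hx
    simp [g, Set.projIcc_of_mem hab hx]
  have houter : (∫ s in a..b, (∫ u in s..b, B (h s) (h u))) =
      ∫ s in a..b, (∫ u in s..b, B (g s) (g u)) := by
    apply intervalIntegral.integral_congr
    intro s hs
    rw [Set.uIcc_of_le hab] at hs
    beta_reduce
    rw [hgeq s hs]
    apply intervalIntegral.integral_congr
    intro u hu
    rw [Set.uIcc_of_le hs.2] at hu
    beta_reduce
    rw [hgeq u ⟨le_trans hs.1 hu.1, hu.2⟩]
  have hinner : (∫ s in a..b, h s) = ∫ s in a..b, g s := by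
    apply intervalIntegral.integral_congr
    intro s hs
    rw [Set.uIcc_of_le hab] at hs
    exact (hgeq s hs).symm
  rw [houter, hinner]
  exact bsi_cont B hB hab g hgcont
end

section
/- Let (S, 𝒮, μ) be a probability space, λ > 0, N a Poisson random variable with parameter λ, and (ξ_i)_{i≥1} an i.i.d. sequence with law μ, with N and (ξ_i) all independent. Let F : S → ℂ be measurable and bounded with Re F ≥ 0 on S. Then E[exp(−Σ_{i=1}^N F(ξ_i))] = exp(λ ∫_S (e^{−F(x)} − 1) μ(dx)). -/
open MeasureTheory ProbabilityTheory

universe u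

/-- The type family for a Poisson count together with an i.i.d. sequence:
`none ↦ ℕ` (the count), `some i ↦ S` (the `i`-th mark). -/
def poissonMixKind (S : Type u) : Option ℕ → Type u
  | none => ULift ℕ
  | some _ => S

/-- Measurable space structure on `poissonMixKind S`. -/
def poissonMixMS (S : Type u) [MeasurableSpace S] :
    ∀ o : Option ℕ, MeasurableSpace (poissonMixKind S o)
  | none => (inferInstance : MeasurableSpace (ULift ℕ))
  | some _ => (inferInstance : MeasurableSpace S)

/-- The combined family of random variables: the count `N` and the marks `ξ i`. -/
def poissonMixFun {Ω : Type*} {S : Type u} (N : Ω → ℕ) (ξ : ℕ → Ω → S) :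
    ∀ o : Option ℕ, Ω → poissonMixKind S o
  | none => fun ω => ULift.up (N ω)
  | some i => ξ i

/-- Bounded measurable functions into `ℂ` are integrable w.r.t. a finite measure. -/
lemma integrable_of_bound {Ω : Type*} [MeasurableSpace Ω] {P : Measure Ω} [IsFiniteMeasure P]
    {f : Ω → ℂ} (hf : AEStronglyMeasurable f P) (C : ℝ) (h : ∀ ω, ‖f ω‖ ≤ C) :
    Integrable f P :=
  (integrable_const C).mono' hf (Filter.Eventually.of_forall h)

/-- The integral of a product of two independent complex random variables factorizes. -/
lemma indepFun_integral_mul_complex {Ω : Type*} [MeasurableSpace Ω] {P : Measure Ω}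
    [IsProbabilityMeasure P] {X Y : Ω → ℂ} (h : IndepFun X Y P)
    (hX : Measurable X) (hY : Measurable Y) :
    ∫ ω, X ω * Y ω ∂P = (∫ ω, X ω ∂P) * ∫ ω, Y ω ∂P := by
  rw [indepFun_iff_map_prod_eq_prod_map_map hX.aemeasurable hY.aemeasurable] at h
  haveI : IsProbabilityMeasure (P.map X) := Measure.isProbabilityMeasure_map hX.aemeasurable
  haveI : IsProbabilityMeasure (P.map Y) := Measure.isProbabilityMeasure_map hY.aemeasurable
  have h1 : ∫ ω, X ω * Y ω ∂P
      = ∫ p : ℂ × ℂ, p.1 * p.2 ∂(P.map (fun ω => (X ω, Y ω))) := by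
    rw [integral_map (hX.prodMk hY).aemeasurable]
    exact (measurable_fst.mul measurable_snd).aestronglyMeasurable
  have h2 : ∫ z : ℂ, z ∂(P.map X) = ∫ ω, X ω ∂P :=
    integral_map hX.aemeasurable measurable_id.aestronglyMeasurable
  have h3 : ∫ z : ℂ, z ∂(P.map Y) = ∫ ω, Y ω ∂P :=
    integral_map hY.aemeasurable measurable_id.aestronglyMeasurable
  rw [h1, h, MeasureTheory.integral_prod_mul (f := fun z : ℂ => z) (g := fun z : ℂ => z),
    h2, h3]

/-- Campbell's formula with complex-valued integrand for a compound Poisson sum: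
if `N` is Poisson(λ), `(ξ_i)` i.i.d. with law `μ`, all independent, and `F : S → ℂ` is
bounded measurable with `Re F ≥ 0`, then
`E[exp(−Σ_{i<N} F(ξ_i))] = exp(λ ∫ (e^{−F} − 1) dμ)`. -/
theorem campbell_formula_complex {Ω : Type*} {S : Type u} [MeasurableSpace Ω]
    [MeasurableSpace S]
    {P : Measure Ω} [IsProbabilityMeasure P] {μ : Measure S} [IsProbabilityMeasure μ]
    (lam : ℝ) (hlam : 0 < lam) (N : Ω → ℕ) (ξ : ℕ → Ω → S)
    (hNmeas : Measurable N) (hξmeas : ∀ i, Measurable (ξ i))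
    (hN : ∀ n : ℕ, P (N ⁻¹' {n}) =
      ENNReal.ofReal (Real.exp (-lam) * lam ^ n / (n.factorial : ℝ)))
    (hξ : ∀ i, Measure.map (ξ i) P = μ)
    (hindep : iIndepFun (m := poissonMixMS S) (poissonMixFun N ξ) P)
    (F : S → ℂ) (hFmeas : Measurable F)
    (hFbd : ∃ C : ℝ, ∀ x, ‖F x‖ ≤ C)
    (hFre : ∀ x, 0 ≤ (F x).re) :
    ∫ ω, Complex.exp (-(∑ i ∈ Finset.range (N ω), F (ξ i ω))) ∂P =
      Complex.exp ((lam : ℂ) * ∫ x, (Complex.exp (-F x) - 1) ∂μ) := by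
  classical
  letI : ∀ o : Option ℕ, MeasurableSpace (poissonMixKind S o) := poissonMixMS S
  have hexpFm : Measurable fun x : S => Complex.exp (-F x) :=
    Complex.measurable_exp.comp hFmeas.neg
  set c : ℂ := ∫ x, Complex.exp (-F x) ∂μ with hc
  -- basic bounds
  have hbd : ∀ x, ‖Complex.exp (-F x)‖ ≤ 1 := by
    intro x
    rw [Complex.norm_exp, Complex.neg_re]
    exact Real.exp_le_one_iff.2 (neg_nonpos.2 (hFre x))
  have hmeasfam : ∀ o, Measurable (poissonMixFun N ξ o) := by
    rintro (_ | i)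
    · exact measurable_up.comp hNmeas
    · exact hξmeas i
  -- the key factorization lemma
  have key : ∀ (n : ℕ) (T : Finset ℕ),
      ∫ ω, Set.indicator ({n} : Set ℕ) (fun _ => (1 : ℂ)) (N ω)
          * ∏ i ∈ T, Complex.exp (-F (ξ i ω)) ∂P
        = ((P (N ⁻¹' {n})).toReal : ℂ) * c ^ T.card := by
    intro n T
    induction T using Finset.induction_on with
    | empty =>
        simp only [Finset.prod_empty, mul_one, Finset.card_empty, pow_zero]
        have : (fun ω => Set.indicator ({n} : Set ℕ) (fun _ => (1 : ℂ)) (N ω))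
            = Set.indicator (N ⁻¹' {n}) (fun _ => (1 : ℂ)) := by
          ext ω
          by_cases h : N ω = n <;> simp [Set.indicator, h]
        rw [this, integral_indicator_const (1 : ℂ) (hNmeas (measurableSet_singleton n))]
        simp [measureReal_def]
    | insert j T' hj ih =>
        -- independence of `exp (-F (ξ j))` and the rest
        have hdisj : Disjoint ({some j} : Finset (Option ℕ))
            (insert none (T'.image some)) := by
          simp [Finset.disjoint_singleton_left, hj]
        have hbase := hindep.indepFun_finset _ _ hdisj hmeasfam
        have hjm : (some j) ∈ ({some j} : Finset (Option ℕ)) := by simp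
        have hnm : (none : Option ℕ) ∈ insert none (T'.image some) := by simp
        have him : ∀ i ∈ T', (some i) ∈ insert none (T'.image some) := fun i hi =>
          Finset.mem_insert_of_mem (Finset.mem_image_of_mem some hi)
        set φ : (∀ o : ({some j} : Finset (Option ℕ)), poissonMixKind S o) → ℂ :=
          fun v => Complex.exp (-F (v ⟨some j, hjm⟩)) with hφdef
        set ψ : (∀ o : (insert none (T'.image some) : Finset (Option ℕ)),
            poissonMixKind S o) → ℂ :=
          fun v => Set.indicator ({n} : Set ℕ) (fun _ => (1 : ℂ))
              ((v ⟨none, hnm⟩ : ULift ℕ).down)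
            * ∏ i ∈ T'.attach, Complex.exp (-F (v ⟨some i.1, him i.1 i.2⟩)) with hψdef
        have hφm : Measurable φ := by
          apply Complex.measurable_exp.comp
          apply Measurable.neg
          exact hFmeas.comp (measurable_pi_apply _)
        have hψm : Measurable ψ := by
          apply Measurable.mul
          · exact (measurable_const.indicator (measurableSet_singleton n)).comp
              (measurable_down.comp (measurable_pi_apply _))
          · exact Finset.measurable_prod _ fun i _ =>
              Complex.measurable_exp.comp
                ((hFmeas.comp (measurable_pi_apply _)).neg)
        have hIndep : IndepFun (fun ω => Complex.exp (-F (ξ j ω)))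
            (fun ω => Set.indicator ({n} : Set ℕ) (fun _ => (1 : ℂ)) (N ω)
              * ∏ i ∈ T', Complex.exp (-F (ξ i ω))) P := by
          have := hbase.comp hφm hψm
          have heq1 : (φ ∘ fun a (i : ({some j} : Finset (Option ℕ))) =>
              poissonMixFun N ξ i a) = fun ω => Complex.exp (-F (ξ j ω)) := rfl
          have heq2 : (ψ ∘ fun a (i : (insert none (T'.image some) :
              Finset (Option ℕ))) => poissonMixFun N ξ i a)
              = fun ω => Set.indicator ({n} : Set ℕ) (fun _ => (1 : ℂ)) (N ω)
                * ∏ i ∈ T', Complex.exp (-F (ξ i ω)) := by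
            funext ω
            simp only [Function.comp_apply, hψdef]
            congr 1
            rw [← Finset.prod_attach T' (fun i => Complex.exp (-F (ξ i ω)))]
            rfl
          rwa [heq1, heq2] at this
        have hXm : Measurable fun ω => Complex.exp (-F (ξ j ω)) :=
          Complex.measurable_exp.comp ((hFmeas.comp (hξmeas j)).neg)
        have hYm : Measurable fun ω =>
            Set.indicator ({n} : Set ℕ) (fun _ => (1 : ℂ)) (N ω)
              * ∏ i ∈ T', Complex.exp (-F (ξ i ω)) := by
          apply Measurable.mul
          · exact (measurable_const.indicator (measurableSet_singleton n)).comp hNmeas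
          · exact Finset.measurable_prod _ fun i _ =>
              Complex.measurable_exp.comp ((hFmeas.comp (hξmeas i)).neg)
        have hfact := indepFun_integral_mul_complex hIndep hXm hYm
        have hint : ∫ ω, Complex.exp (-F (ξ j ω)) ∂P = c := by
          rw [hc, ← hξ j,
            integral_map (hξmeas j).aemeasurable hexpFm.aestronglyMeasurable]
        calc ∫ ω, Set.indicator ({n} : Set ℕ) (fun _ => (1 : ℂ)) (N ω)
                * ∏ i ∈ insert j T', Complex.exp (-F (ξ i ω)) ∂P
            = ∫ ω, Complex.exp (-F (ξ j ω))
                * (Set.indicator ({n} : Set ℕ) (fun _ => (1 : ℂ)) (N ω)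
                  * ∏ i ∈ T', Complex.exp (-F (ξ i ω))) ∂P := by
              congr 1; funext ω; rw [Finset.prod_insert hj]; ring
          _ = c * (((P (N ⁻¹' {n})).toReal : ℂ) * c ^ T'.card) := by
              rw [hfact, hint, ih]
          _ = ((P (N ⁻¹' {n})).toReal : ℂ) * c ^ (insert j T').card := by
              rw [Finset.card_insert_of_notMem hj]; ring
  -- the integrand and its integrability
  set g : Ω → ℂ := fun ω => Complex.exp (-(∑ i ∈ Finset.range (N ω), F (ξ i ω))) with hg
  have hgmeas : Measurable g := by
    apply Complex.measurable_exp.comp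
    apply Measurable.neg
    intro t ht
    have hpre : (fun ω => ∑ i ∈ Finset.range (N ω), F (ξ i ω)) ⁻¹' t
        = ⋃ n : ℕ, ((N ⁻¹' {n}) ∩
            (fun ω => ∑ i ∈ Finset.range n, F (ξ i ω)) ⁻¹' t) := by
      ext ω
      simp only [Set.mem_preimage, Set.mem_iUnion, Set.mem_inter_iff, Set.mem_singleton_iff]
      exact ⟨fun h => ⟨N ω, rfl, h⟩, fun ⟨n, hn, h⟩ => by rw [hn]; exact h⟩
    rw [hpre]
    exact MeasurableSet.iUnion fun n => (hNmeas (measurableSet_singleton n)).inter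
      ((Finset.measurable_sum _ fun i _ => hFmeas.comp (hξmeas i)) ht)
  have hgbd : ∀ ω, ‖g ω‖ ≤ 1 := by
    intro ω
    rw [hg, Complex.norm_exp, Complex.neg_re]
    apply Real.exp_le_one_iff.2
    rw [neg_nonpos, Complex.re_sum]
    exact Finset.sum_nonneg fun i _ => hFre _
  have hgint : Integrable g P := integrable_of_bound hgmeas.aestronglyMeasurable 1 hgbd
  -- decompose over the level sets of N
  have hmeasS : ∀ n : ℕ, MeasurableSet (N ⁻¹' {n}) :=
    fun n => hNmeas (measurableSet_singleton n)
  have hdisjS : Pairwise (Function.onFun Disjoint fun n => N ⁻¹' {n}) := by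
    intro m n hmn
    simp only [Function.onFun]
    apply Set.disjoint_left.2
    intro ω hm hn
    exact hmn ((Set.mem_preimage.1 hm).symm.trans (Set.mem_preimage.1 hn) : m = n)
  have hcover : (⋃ n : ℕ, N ⁻¹' {n}) = Set.univ := by
    ext ω; simp
  have hsplit : ∫ ω, g ω ∂P = ∑' n : ℕ, ∫ ω in N ⁻¹' {n}, g ω ∂P := by
    rw [← setIntegral_univ, ← hcover]
    exact integral_iUnion hmeasS hdisjS (hgint.integrableOn)
  -- compute each piece
  have hpiece : ∀ n : ℕ, ∫ ω in N ⁻¹' {n}, g ω ∂P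
      = ((P (N ⁻¹' {n})).toReal : ℂ) * c ^ n := by
    intro n
    rw [← integral_indicator (hmeasS n)]
    have : Set.indicator (N ⁻¹' {n}) g
        = fun ω => Set.indicator ({n} : Set ℕ) (fun _ => (1 : ℂ)) (N ω)
          * ∏ i ∈ Finset.range n, Complex.exp (-F (ξ i ω)) := by
      funext ω
      by_cases h : N ω = n
      · simp only [Set.indicator, Set.mem_preimage, Set.mem_singleton_iff, h, if_true,
          if_pos rfl, one_mul, hg]
        rw [← Complex.exp_sum]
        congr 1
        rw [Finset.sum_neg_distrib]
      · simp [Set.indicator, h, hg]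
    rw [this]
    simpa using key n (Finset.range n)
  -- assemble the series
  have hptoReal : ∀ n : ℕ, ((P (N ⁻¹' {n})).toReal : ℂ)
      = (Real.exp (-lam) : ℂ) * ((lam : ℂ) ^ n / (n.factorial : ℂ)) := by
    intro n
    rw [hN n, ENNReal.toReal_ofReal (by positivity)]
    push_cast
    ring
  have hsum : ∫ ω, g ω ∂P = (Real.exp (-lam) : ℂ) * Complex.exp ((lam : ℂ) * c) := by
    rw [hsplit]
    have : ∀ n : ℕ, ∫ ω in N ⁻¹' {n}, g ω ∂P
        = (Real.exp (-lam) : ℂ) * (((lam : ℂ) * c) ^ n / (n.factorial : ℂ)) := by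
      intro n
      rw [hpiece n, hptoReal n, mul_pow]
      ring
    rw [tsum_congr this, tsum_mul_left]
    congr 1
    rw [Complex.exp_eq_exp_ℂ, NormedSpace.exp_eq_tsum_div]
  -- compute the integral of exp(-F) - 1
  have hintc : ∫ x, (Complex.exp (-F x) - 1) ∂μ = c - 1 := by
    rw [integral_sub (integrable_of_bound hexpFm.aestronglyMeasurable 1 hbd)
        (integrable_const 1)]
    simp [hc]
  rw [show (∫ ω, Complex.exp (-(∑ i ∈ Finset.range (N ω), F (ξ i ω))) ∂P) = ∫ ω, g ω ∂P
      from rfl, hsum, hintc]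
  rw [Complex.ofReal_exp, ← Complex.exp_add]
  congr 1
  push_cast
  ring
end
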